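/- Let p : ℕ → ℕ be finitely supported with p_k = 0 for all k < 3, and let V be a natural number with V > 24 such that ∑_{k} p_k = V + 2 and ∑_{k} k·p_k = 4V. Then ∑_{k} k(k − 3)·p_k > 3V. -/

import Mathlib

/-- For a finitely supported face vector `p` of an ideal right-angled hyperbolic
3-polyhedron with `V > 24` vertices (so `∑ p_k = V + 2` and `∑ k·p_k = 4V`, and
`p_k = 0` for `k < 3`), the total quasi-adjacency count satisfies
`∑ k(k − 3)·p_k > 3V`. -/
theorem ideal_quasi_adjacent_gt (p : ℕ →₀ ℕ) (h3 : ∀ k < 3, p k = 0) (V : ℕ)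
    (hV : 24 < V)
    (hsum : ∑ k ∈ p.support, p k = V + 2)
    (hksum : ∑ k ∈ p.support, k * p k = 4 * V) :
    3 * V < ∑ k ∈ p.support, k * (k - 3) * p k := by
  have hk3 : ∀ k ∈ p.support, 3 ≤ k := by
    intro k hk
    by_contra h
    exact Finsupp.mem_support_iff.mp hk (h3 k (by omega))
  -- ∑ (k-3) * p k = V - 6
  have h1 : ∑ k ∈ p.support, 3 * p k + ∑ k ∈ p.support, (k - 3) * p k
      = ∑ k ∈ p.support, k * p k := by
    rw [← Finset.sum_add_distrib]
    refine Finset.sum_congr rfl fun k hk => ?_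
    have h := hk3 k hk
    have hk' : k = 3 + (k - 3) := by omega
    calc 3 * p k + (k - 3) * p k = (3 + (k - 3)) * p k := by ring
    _ = k * p k := by rw [← hk']
  have h2 : ∑ k ∈ p.support, 3 * p k = 3 * (V + 2) := by
    rw [← Finset.mul_sum, hsum]
  have hS : ∑ k ∈ p.support, (k - 3) * p k = V - 6 := by omega
  have h4 : ∑ k ∈ p.support, 4 * ((k - 3) * p k)
      ≤ ∑ k ∈ p.support, k * (k - 3) * p k := by
    refine Finset.sum_le_sum fun k hk => ?_
    have h := hk3 k hk
    rcases Nat.lt_or_ge k 4 with h4 | h4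
    · have : k - 3 = 0 := by omega
      simp [this]
    · calc 4 * ((k - 3) * p k) = 4 * (k - 3) * p k := by ring
      _ ≤ k * (k - 3) * p k := by
          exact Nat.mul_le_mul_right _ (Nat.mul_le_mul_right _ h4)
  rw [← Finset.mul_sum, hS] at h4
  omega
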